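/- Let s₁, s₂ ∈ ℝ^L with d := ‖s₁ − s₂‖ > 0, let σ₀ > 0, let μ_s denote the Gaussian probability measure on ℝ^L with mean s and covariance σ₀² I_L (the product of L one-dimensional Gaussians N(s_i, σ₀²)), and let π₁, π₂ > 0 with π₁ + π₂ = 1. Then for every measurable decision rule D : ℝ^L → {1,2}, the Bayes error probability satisfies π₁·μ_{s₁}({y : D(y) = 2}) + π₂·μ_{s₂}({y : D(y) = 1}) ≥ π₁·Q(d/(2σ₀) + (σ₀/d)·ln(π₁/π₂)) + π₂·Q(d/(2σ₀) − (σ₀/d)·ln(π₁/π₂)). -/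

import Mathlib

open MeasureTheory ProbabilityTheory

/-- The standard normal tail function `Q(x) = (2π)^{-1/2} ∫_x^∞ e^{-t²/2} dt`. -/
noncomputable def Qfun (x : ℝ) : ℝ :=
  (Real.sqrt (2 * Real.pi))⁻¹ * ∫ t in Set.Ioi x, Real.exp (-t ^ 2 / 2)

/-- The Gaussian measure on `ℝ^L` with mean `s` and covariance `σ₀² I_L`
(the product of the one-dimensional Gaussians `N(s i, σ₀²)`). -/
noncomputable def gaussianVec {L : ℕ} (s : Fin L → ℝ) (σ₀ : ℝ) : Measure (Fin L → ℝ) :=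
  Measure.pi fun i => gaussianReal (s i) ⟨σ₀ ^ 2, sq_nonneg σ₀⟩

section MAPaux
open Real Set
open scoped NNReal ENNReal

lemma gpdf_le (m : ℝ) (v : ℝ≥0) (x : ℝ) : gaussianPDFReal m v x ≤ (Real.sqrt (2 * π * v))⁻¹ := by
  unfold gaussianPDFReal
  have h1 : rexp (-(x - m) ^ 2 / (2 * v)) ≤ 1 := by
    rw [Real.exp_le_one_iff]
    apply div_nonpos_of_nonpos_of_nonneg
    · simp [sq_nonneg]
    · positivity
  calc (Real.sqrt (2 * π * v))⁻¹ * rexp (-(x - m) ^ 2 / (2 * v))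
      ≤ (Real.sqrt (2 * π * v))⁻¹ * 1 := by
        apply mul_le_mul_of_nonneg_left h1 (by positivity)
    _ = _ := mul_one _

lemma gpdf_conv (m m' : ℝ) {v v' : ℝ≥0} (hv : v ≠ 0) (hv' : v' ≠ 0) (z : ℝ) :
    ∫ x, gaussianPDFReal m v x * gaussianPDFReal m' v' (z - x) =
      gaussianPDFReal (m + m') (v + v') z := by
  have ha : (0:ℝ) < v := lt_of_le_of_ne v.2 (by exact_mod_cast (Ne.symm hv))
  have hb : (0:ℝ) < v' := lt_of_le_of_ne v'.2 (by exact_mod_cast (Ne.symm hv'))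
  set a : ℝ := (v : ℝ) with hadef
  set b : ℝ := (v' : ℝ) with hbdef
  have hab : (0:ℝ) < a + b := by linarith
  have hπ := Real.pi_pos
  set c : ℝ := (a + b) / (2 * a * b) with hcdef
  have hc : 0 < c := by positivity
  set t : ℝ := m + a * (z - m - m') / (a + b) with htdef
  set C : ℝ := (Real.sqrt (2 * π * a))⁻¹ * (Real.sqrt (2 * π * b))⁻¹ *
      rexp (-(z - m - m') ^ 2 / (2 * (a + b))) with hCdef
  have key : ∀ x, gaussianPDFReal m v x * gaussianPDFReal m' v' (z - x)
      = C * rexp (-c * (x - t) ^ 2) := by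
    intro x
    unfold gaussianPDFReal
    rw [hCdef, mul_mul_mul_comm, mul_assoc ((Real.sqrt (2 * π * a))⁻¹ * (Real.sqrt (2 * π * b))⁻¹),
      ← Real.exp_add, ← Real.exp_add]
    congr 1
    congr 1
    rw [hcdef, htdef, hadef, hbdef]
    have ha' : (v:ℝ) ≠ 0 := ha.ne'
    have hb' : (v':ℝ) ≠ 0 := hb.ne'
    field_simp
    ring
  rw [MeasureTheory.integral_congr_ae (Filter.Eventually.of_forall key),
    MeasureTheory.integral_const_mul,
    integral_sub_right_eq_self (fun y => rexp (-c * y ^ 2)) t, integral_gaussian c]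
  unfold gaussianPDFReal
  have hsq : (Real.sqrt (2 * π * a))⁻¹ * (Real.sqrt (2 * π * b))⁻¹ * Real.sqrt (π / c)
      = (Real.sqrt (2 * π * (a + b)))⁻¹ := by
    rw [hcdef, ← Real.sqrt_inv, ← Real.sqrt_inv, ← Real.sqrt_mul (by positivity),
      ← Real.sqrt_mul (by positivity), ← Real.sqrt_inv]
    congr 1
    field_simp
  have hexp : rexp (-(z - m - m') ^ 2 / (2 * (a + b))) = rexp (-(z - (m + m')) ^ 2 / (2 * (a + b))) := by
    ring_nf
  calc C * Real.sqrt (π / c)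
      = ((Real.sqrt (2 * π * a))⁻¹ * (Real.sqrt (2 * π * b))⁻¹ * Real.sqrt (π / c)) *
        rexp (-(z - m - m') ^ 2 / (2 * (a + b))) := by rw [hCdef]; ring
    _ = (Real.sqrt (2 * π * (a + b)))⁻¹ * rexp (-(z - (m + m')) ^ 2 / (2 * (a + b))) := by
        rw [hsq, hexp]
    _ = (Real.sqrt (2 * π * ((v:ℝ) + (v':ℝ))))⁻¹ * rexp (-(z - (m + m')) ^ 2 / (2 * ((v:ℝ) + (v':ℝ)))) := rfl
    _ = (Real.sqrt (2 * π * ((v + v' : ℝ≥0) : ℝ)))⁻¹ * rexp (-(z - (m + m')) ^ 2 / (2 * ((v + v' : ℝ≥0) : ℝ))) := by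
        norm_num

lemma lconv (m m' : ℝ) {v v' : ℝ≥0} (hv : v ≠ 0) (hv' : v' ≠ 0) (z : ℝ) :
    ∫⁻ x, gaussianPDF m v x * gaussianPDF m' v' (z - x) =
      gaussianPDF (m + m') (v + v') z := by
  simp only [gaussianPDF]
  have h1 : ∀ x, ENNReal.ofReal (gaussianPDFReal m v x) * ENNReal.ofReal (gaussianPDFReal m' v' (z - x))
      = ENNReal.ofReal (gaussianPDFReal m v x * gaussianPDFReal m' v' (z - x)) := fun x =>
    (ENNReal.ofReal_mul (gaussianPDFReal_nonneg _ _ _)).symm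
  simp_rw [h1]
  rw [← ofReal_integral_eq_lintegral_ofReal]
  · rw [gpdf_conv m m' hv hv' z]
  · have hbdd : ∀ x, ‖gaussianPDFReal m' v' (z - x)‖ ≤ (Real.sqrt (2 * π * v'))⁻¹ := by
      intro x
      rw [Real.norm_eq_abs, abs_of_nonneg (gaussianPDFReal_nonneg _ _ _)]
      exact gpdf_le _ _ _
    have := (integrable_gaussianPDFReal m v).bdd_mul
      (((measurable_gaussianPDFReal m' v').comp (measurable_const.sub measurable_id)).aestronglyMeasurable)
      (Filter.Eventually.of_forall hbdd)
    exact this.congr (Filter.Eventually.of_forall (fun x => by simp only [Function.comp_apply, id_eq, Pi.sub_apply]; ring))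
  · exact Filter.Eventually.of_forall fun x =>
      mul_nonneg (gaussianPDFReal_nonneg _ _ _) (gaussianPDFReal_nonneg _ _ _)

lemma gaussianReal_conv (m m' : ℝ) (v v' : ℝ≥0) :
    ((gaussianReal m v).prod (gaussianReal m' v')).map (fun p : ℝ × ℝ => p.1 + p.2)
      = gaussianReal (m + m') (v + v') := by
  classical
  by_cases hv : v = 0
  · subst hv
    rw [gaussianReal_zero_var, Measure.dirac_prod,
      Measure.map_map (by fun_prop) (by fun_prop)]
    have : ((fun p : ℝ × ℝ => p.1 + p.2) ∘ Prod.mk m) = (m + ·) := rfl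
    rw [this, gaussianReal_map_const_add, zero_add, add_comm]
  by_cases hv' : v' = 0
  · subst hv'
    rw [gaussianReal_zero_var, Measure.prod_dirac,
      Measure.map_map (by fun_prop) (by fun_prop)]
    have : ((fun p : ℝ × ℝ => p.1 + p.2) ∘ (fun x => (x, m'))) = (· + m') := rfl
    rw [this, gaussianReal_map_add_const, add_zero]
  -- main case
  have hvv' : v + v' ≠ 0 := by simp [hv]
  ext s hs
  rw [Measure.map_apply (by fun_prop) hs,
    Measure.prod_apply (hs.preimage (by fun_prop))]
  have hmk : ∀ x : ℝ, (Prod.mk x ⁻¹' ((fun p : ℝ × ℝ => p.1 + p.2) ⁻¹' s)) = (x + ·) ⁻¹' s := by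
    intro x; rfl
  simp_rw [hmk]
  have hstep : ∀ x : ℝ, (gaussianReal m' v') ((x + ·) ⁻¹' s)
      = ∫⁻ z, s.indicator (fun z => gaussianPDF m' v' (z - x)) z := by
    intro x
    rw [← Measure.map_apply (by fun_prop) hs, gaussianReal_map_const_add,
      gaussianReal_apply _ hv' s, ← lintegral_indicator hs]
    congr 1
    funext z
    unfold Set.indicator
    split
    · simp only [gaussianPDF, gaussianPDFReal_sub, add_comm]
    · rfl
  simp_rw [hstep]
  set F : ℝ × ℝ → ℝ≥0∞ := fun p => s.indicator (fun z => gaussianPDF m' v' (z - p.1)) p.2 with hF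
  have hFmeas : Measurable F := by
    have : F = fun p : ℝ × ℝ => if p.2 ∈ s then gaussianPDF m' v' (p.2 - p.1) else 0 := by
      classical
      funext p; simp [hF, Set.indicator_apply]
    rw [this]
    exact Measurable.ite (measurable_snd hs)
      ((measurable_gaussianPDF m' v').comp (measurable_snd.sub measurable_fst)) measurable_const
  have hG : Measurable fun x => ∫⁻ z, F (x, z) :=
    Measurable.lintegral_prod_right hFmeas
  rw [gaussianReal_of_var_ne_zero _ hv,
    lintegral_withDensity_eq_lintegral_mul _ (measurable_gaussianPDF m v) hG]
  have hswap : ∫⁻ x, (gaussianPDF m v * fun x => ∫⁻ z, F (x, z)) x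
      = ∫⁻ x, ∫⁻ z, gaussianPDF m v x * F (x, z) := by
    congr 1; funext x
    simp only [Pi.mul_apply]
    exact (lintegral_const_mul _ (hFmeas.comp measurable_prodMk_left)).symm
  rw [hswap, lintegral_lintegral_swap ((measurable_gaussianPDF m v).comp measurable_fst |>.mul hFmeas).aemeasurable]
  have hinner : ∀ z, ∫⁻ x, gaussianPDF m v x * F (x, z)
      = s.indicator (gaussianPDF (m + m') (v + v')) z := by
    intro z
    by_cases hz : z ∈ s
    · simp only [hF, Set.indicator_of_mem hz]
      rw [← lconv m m' hv hv' z]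
    · simp only [hF, Set.indicator_of_notMem hz, mul_zero, lintegral_zero]
  simp_rw [hinner]
  rw [lintegral_indicator hs, gaussianReal_apply _ hvv' s]

lemma toNNReal_sq (c : ℝ) : (c^2).toNNReal = (⟨c^2, sq_nonneg c⟩ : ℝ≥0) := by
  ext; simp [Real.coe_toNNReal', max_eq_left (sq_nonneg c)]; rfl

lemma map_sum_pi : ∀ (n : ℕ) (c m : Fin n → ℝ) (v : Fin n → ℝ≥0),
    (Measure.pi fun i => gaussianReal (m i) (v i)).map (fun y => ∑ i, c i * y i)
      = gaussianReal (∑ i, c i * m i) (∑ i, ((c i)^2).toNNReal * v i) := by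
  intro n
  induction n with
  | zero =>
    intro c m v
    rw [Measure.pi_of_empty, Measure.map_dirac' (by fun_prop)]
    simp only [Finset.univ_eq_empty, Finset.sum_empty]
    rw [gaussianReal_zero_var]
  | succ n ih =>
    intro c m v
    set e := MeasurableEquiv.piFinSuccAbove (fun _ : Fin (n+1) => ℝ) 0 with he
    have hmp := measurePreserving_piFinSuccAbove (fun i : Fin (n+1) => gaussianReal (m i) (v i)) 0
    have hpi : (Measure.pi fun i : Fin (n+1) => gaussianReal (m i) (v i)).map e
        = (gaussianReal (m 0) (v 0)).prod
            (Measure.pi fun j : Fin n => gaussianReal (m j.succ) (v j.succ)) := by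
      rw [hmp.map_eq]
      congr 1
    have hT : (fun y : Fin (n+1) → ℝ => ∑ i, c i * y i)
        = ((fun q : ℝ × ℝ => q.1 + q.2) ∘
            (Prod.map (fun x : ℝ => c 0 * x) (fun y : Fin n → ℝ => ∑ j, c j.succ * y j)) ∘ e) := by
      funext y
      simp only [Function.comp_apply, he, MeasurableEquiv.piFinSuccAbove_apply, Prod.map_apply]
      rw [Fin.sum_univ_succ]
      simp [Fin.succAbove_zero, Fin.tail]
    rw [hT, ← Measure.map_map (by fun_prop) (by fun_prop),
      ← Measure.map_map (by fun_prop) (by fun_prop), hpi,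
      ← Measure.map_prod_map _ _ (by fun_prop) (by fun_prop),
      gaussianReal_map_const_mul, ih (fun j => c j.succ) (fun j => m j.succ) (fun j => v j.succ),
      gaussianReal_conv, show NNReal.mk (c 0 ^ 2) (sq_nonneg _) = ((c 0)^2).toNNReal from (toNNReal_sq _).symm, ← Fin.sum_univ_succ (fun i => c i * m i),
      ← Fin.sum_univ_succ (fun i => ((c i)^2).toNNReal * v i)]

noncomputable def gRatio (a b : ℝ) (v : ℝ≥0) (x : ℝ) : ℝ≥0∞ :=
  ENNReal.ofReal (rexp (((a - b) * x + (b^2 - a^2)/2) / v))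

lemma gRatio_meas (a b : ℝ) (v : ℝ≥0) : Measurable (gRatio a b v) := by
  unfold gRatio; fun_prop

lemma gaussianReal_withDensity (a b : ℝ) {v : ℝ≥0} (hv : v ≠ 0) :
    (gaussianReal b v).withDensity (gRatio a b v) = gaussianReal a v := by
  have hvr : (0:ℝ) < v := lt_of_le_of_ne v.2 (by exact_mod_cast (Ne.symm hv))
  rw [gaussianReal_of_var_ne_zero _ hv, gaussianReal_of_var_ne_zero _ hv,
    ← withDensity_mul _ (measurable_gaussianPDF b v) (gRatio_meas a b v)]
  congr 1
  funext x
  simp only [Pi.mul_apply, gaussianPDF, gRatio,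
    ← ENNReal.ofReal_mul (gaussianPDFReal_nonneg b v x)]
  congr 1
  unfold gaussianPDFReal
  rw [mul_assoc, ← Real.exp_add]
  congr 1
  field_simp
  ring

lemma withDensity_map_equiv {α β : Type*} [MeasurableSpace α] [MeasurableSpace β]
    (μ : Measure α) (e : α ≃ᵐ β) {f : β → ℝ≥0∞} (hf : Measurable f) :
    (μ.map e).withDensity f = (μ.withDensity (fun a => f (e a))).map e := by
  ext s hs
  rw [withDensity_apply _ hs, Measure.map_apply e.measurable hs,
    withDensity_apply _ (e.measurable hs), Measure.restrict_map e.measurable hs,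
    lintegral_map hf e.measurable]

lemma prod_withDensity {α β : Type*} [MeasurableSpace α] [MeasurableSpace β]
    {μ : Measure α} {ν : Measure β} [SigmaFinite μ] [SigmaFinite ν]
    {f : α → ℝ≥0∞} {g : β → ℝ≥0∞} (hf : Measurable f) (hg : Measurable g)
    [SigmaFinite (μ.withDensity f)] [SigmaFinite (ν.withDensity g)] :
    (μ.withDensity f).prod (ν.withDensity g)
      = (μ.prod ν).withDensity (fun p => f p.1 * g p.2) := by
  refine Measure.prod_eq fun s t hs ht => ?_
  rw [withDensity_apply _ (hs.prod ht), ← Measure.prod_restrict,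
    lintegral_prod_mul hf.aemeasurable hg.aemeasurable,
    withDensity_apply _ hs, withDensity_apply _ ht]


lemma pi_gauss_withDensity : ∀ (n : ℕ) (s₁ s₂ : Fin n → ℝ) {v : ℝ≥0}, v ≠ 0 →
    Measure.pi (fun i => gaussianReal (s₂ i) v)
      = (Measure.pi fun i => gaussianReal (s₁ i) v).withDensity
          (fun y => ∏ i, gRatio (s₂ i) (s₁ i) v (y i)) := by
  intro n
  induction n with
  | zero =>
    intro s₁ s₂ v hv
    simp only [Finset.univ_eq_empty, Finset.prod_empty]
    rw [Measure.pi_of_empty, Measure.pi_of_empty,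
      show (fun _ : (Fin 0 → ℝ) => (1:ℝ≥0∞)) = 1 from rfl, withDensity_one]
  | succ n ih =>
    intro s₁ s₂ v hv
    set e := MeasurableEquiv.piFinSuccAbove (fun _ : Fin (n+1) => ℝ) 0 with he
    have hmp2 := (measurePreserving_piFinSuccAbove
      (fun i : Fin (n+1) => gaussianReal (s₂ i) v) 0).map_eq
    have hmp1 := (measurePreserving_piFinSuccAbove
      (fun i : Fin (n+1) => gaussianReal (s₁ i) v) 0).map_eq
    simp only [Fin.succAbove_zero] at hmp1 hmp2
    have hpi2 : (Measure.pi fun i : Fin (n+1) => gaussianReal (s₂ i) v)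
        = ((gaussianReal (s₂ 0) v).prod
            (Measure.pi fun j : Fin n => gaussianReal (s₂ j.succ) v)).map e.symm := by
      rw [← hmp2, MeasurableEquiv.map_symm_map]
    have hpi1 : (gaussianReal (s₁ 0) v).prod
          (Measure.pi fun j : Fin n => gaussianReal (s₁ j.succ) v)
        = (Measure.pi fun i : Fin (n+1) => gaussianReal (s₁ i) v).map e := hmp1.symm
    haveI h1 : SigmaFinite ((gaussianReal (s₁ 0) v).withDensity (gRatio (s₂ 0) (s₁ 0) v)) := by
      rw [gaussianReal_withDensity _ _ hv]; infer_instance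
    haveI h2 : SigmaFinite ((Measure.pi fun j : Fin n => gaussianReal (s₁ j.succ) v).withDensity
        (fun y => ∏ j, gRatio (s₂ j.succ) (s₁ j.succ) v (y j))) := by
      rw [← ih (fun j => s₁ j.succ) (fun j => s₂ j.succ) hv]; infer_instance
    have hGmeas : Measurable fun y : Fin n → ℝ => ∏ j, gRatio (s₂ j.succ) (s₁ j.succ) v (y j) :=
      Finset.measurable_prod _ fun j _ => (gRatio_meas _ _ _).comp (measurable_pi_apply j)
    rw [hpi2, ← gaussianReal_withDensity (s₂ 0) (s₁ 0) hv,
      ih (fun j => s₁ j.succ) (fun j => s₂ j.succ) hv,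
      _root_.prod_withDensity (gRatio_meas _ _ _) hGmeas, hpi1,
      withDensity_map_equiv _ e (by
        exact ((gRatio_meas _ _ _).comp measurable_fst).mul (hGmeas.comp measurable_snd)),
      MeasurableEquiv.map_symm_map]
    congr 1
    funext y
    simp only [he, MeasurableEquiv.piFinSuccAbove_apply]
    rw [Fin.prod_univ_succ]
    simp [Fin.succAbove_zero, Fin.tail]

lemma Qfun_nonneg (x : ℝ) : 0 ≤ Qfun x := by
  unfold Qfun
  apply mul_nonneg (by positivity)
  apply integral_nonneg
  intro t; positivity

lemma stdGauss_Ioi (w : ℝ) : gaussianReal 0 1 (Ioi w) = ENNReal.ofReal (Qfun w) := by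
  rw [gaussianReal_apply_eq_integral _ one_ne_zero]
  congr 1
  unfold Qfun gaussianPDFReal
  rw [← MeasureTheory.integral_const_mul]
  apply setIntegral_congr_fun measurableSet_Ioi
  intro t _
  norm_num

lemma gaussianReal_eq_map (a : ℝ) {v : ℝ≥0} (hv : v ≠ 0) :
    gaussianReal a v = (gaussianReal 0 1).map (fun u => Real.sqrt v * u + a) := by
  have h1 : (fun u : ℝ => Real.sqrt v * u + a) = (· + a) ∘ (fun u => Real.sqrt v * u) := rfl
  rw [h1, ← Measure.map_map (by fun_prop) (by fun_prop), gaussianReal_map_const_mul,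
    gaussianReal_map_add_const]
  congr 2
  · simp
  · ext
    simp [Real.sq_sqrt v.2]

lemma sqrtv_pos {v : ℝ≥0} (hv : v ≠ 0) : (0:ℝ) < Real.sqrt v := by
  apply Real.sqrt_pos.2
  exact lt_of_le_of_ne v.2 (by exact_mod_cast (Ne.symm hv))

lemma gaussianReal_Ioi (a : ℝ) {v : ℝ≥0} (hv : v ≠ 0) (x : ℝ) :
    gaussianReal a v (Ioi x) = ENNReal.ofReal (Qfun ((x - a) / Real.sqrt v)) := by
  have hs := sqrtv_pos hv
  rw [gaussianReal_eq_map a hv, Measure.map_apply (by fun_prop) measurableSet_Ioi]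
  have : (fun u : ℝ => Real.sqrt v * u + a) ⁻¹' (Ioi x) = Ioi ((x - a) / Real.sqrt v) := by
    ext u
    simp only [mem_preimage, mem_Ioi]
    rw [div_lt_iff₀ hs]
    constructor <;> intro h <;> nlinarith
  rw [this, stdGauss_Ioi]

lemma gaussianReal_Iic (a : ℝ) {v : ℝ≥0} (hv : v ≠ 0) (x : ℝ) :
    gaussianReal a v (Iic x) = ENNReal.ofReal (Qfun ((a - x) / Real.sqrt v)) := by
  have hs := sqrtv_pos hv
  have hIio : gaussianReal a v (Iic x) = gaussianReal a v (Iio x) := by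
    have hsing : gaussianReal a v {x} = 0 :=
      (gaussianReal_absolutelyContinuous a hv) (volume_singleton)
    rw [← Iio_union_right, measure_union (by simp) (measurableSet_singleton x), hsing, add_zero]
  rw [hIio, gaussianReal_eq_map a hv, Measure.map_apply (by fun_prop) measurableSet_Iio]
  have : (fun u : ℝ => Real.sqrt v * u + a) ⁻¹' (Iio x) = Iio ((x - a) / Real.sqrt v) := by
    ext u
    simp only [mem_preimage, mem_Iio]
    rw [lt_div_iff₀ hs]
    constructor <;> intro h <;> nlinarith
  rw [this]
  -- reflect: gaussianReal 0 1 is symmetric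
  have hneg : (gaussianReal 0 1).map (fun u : ℝ => -u) = gaussianReal 0 1 := by
    have h := gaussianReal_map_const_mul (μ := 0) (v := 1) (-1 : ℝ)
    rw [show (fun u : ℝ => -u) = ((-1 : ℝ) * ·) by funext u; ring, h]
    norm_num
  have hIm : (fun u : ℝ => -u) ⁻¹' (Ioi (-((x - a) / Real.sqrt v))) = Iio ((x - a) / Real.sqrt v) := by
    ext u
    simp [mem_preimage, mem_Ioi, mem_Iio, neg_lt_neg_iff]
  rw [← hIm, ← Measure.map_apply (by fun_prop) measurableSet_Ioi, hneg, stdGauss_Ioi]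
  congr 2
  field_simp
  ring

lemma bayes_lb {α : Type*} [MeasurableSpace α] (μ : Measure α) {ρ : α → ℝ≥0∞}
    (hρ : Measurable ρ) (p₁ p₂ : ℝ≥0∞) {A : Set α} (hA : MeasurableSet A) :
    p₁ * μ {y | p₁ ≤ p₂ * ρ y} + p₂ * (μ.withDensity ρ) {y | p₁ ≤ p₂ * ρ y}ᶜ
      ≤ p₁ * μ A + p₂ * (μ.withDensity ρ) Aᶜ := by
  set B : Set α := {y | p₁ ≤ p₂ * ρ y} with hBdef
  have hB : MeasurableSet B := measurableSet_le measurable_const (hρ.const_mul p₂)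
  set f : α → ℝ≥0∞ := fun y => min p₁ (p₂ * ρ y) with hfdef
  have herr : ∀ S : Set α, MeasurableSet S →
      p₁ * μ S + p₂ * (μ.withDensity ρ) Sᶜ
        = (∫⁻ y in S, p₁ ∂μ) + ∫⁻ y in Sᶜ, p₂ * ρ y ∂μ := by
    intro S hS
    rw [setLIntegral_const, withDensity_apply _ hS.compl, lintegral_const_mul _ hρ]
  rw [herr A hA, herr B hB]
  have hBeq : (∫⁻ y in B, p₁ ∂μ) + (∫⁻ y in Bᶜ, p₂ * ρ y ∂μ) = ∫⁻ y, f y ∂μ := by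
    rw [← lintegral_add_compl f hB]
    congr 1
    · exact setLIntegral_congr_fun hB (fun y hy =>
        (min_eq_left hy).symm)
    · refine setLIntegral_congr_fun hB.compl (fun y hy => ?_)
      have : ¬ p₁ ≤ p₂ * ρ y := hy
      exact (min_eq_right (le_of_not_ge this)).symm
  rw [hBeq, ← lintegral_add_compl f hA]
  exact add_le_add (lintegral_mono fun y => min_le_left _ _)
    (lintegral_mono fun y => min_le_right _ _)

/-- Optimality of the MAP detector for binary hypothesis testing of two known signals in
AWGN: every measurable decision rule `D : ℝ^L → {1,2}` (here `Fin 2`, with `D y = 0`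
meaning "decide s₁" and `D y = 1` meaning "decide s₂") has Bayes error probability at least
`π₁ Q(d/(2σ₀) + (σ₀/d) ln(π₁/π₂)) + π₂ Q(d/(2σ₀) − (σ₀/d) ln(π₁/π₂))`. -/
theorem stmt4 {L : ℕ} (s₁ s₂ : Fin L → ℝ) (σ₀ : ℝ) (hσ : 0 < σ₀)
    (hd : 0 < Real.sqrt (∑ i, (s₁ i - s₂ i) ^ 2))
    (π₁ π₂ : ℝ) (hπ₁ : 0 < π₁) (hπ₂ : 0 < π₂) (hsum : π₁ + π₂ = 1)
    (D : (Fin L → ℝ) → Fin 2) (hD : Measurable D) :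
    π₁ * Qfun (Real.sqrt (∑ i, (s₁ i - s₂ i) ^ 2) / (2 * σ₀) +
        σ₀ / Real.sqrt (∑ i, (s₁ i - s₂ i) ^ 2) * Real.log (π₁ / π₂)) +
      π₂ * Qfun (Real.sqrt (∑ i, (s₁ i - s₂ i) ^ 2) / (2 * σ₀) -
        σ₀ / Real.sqrt (∑ i, (s₁ i - s₂ i) ^ 2) * Real.log (π₁ / π₂)) ≤
    π₁ * (gaussianVec s₁ σ₀ {y | D y = 1}).toReal +
      π₂ * (gaussianVec s₂ σ₀ {y | D y = 0}).toReal := by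
  set v : ℝ≥0 := ⟨σ₀ ^ 2, sq_nonneg σ₀⟩ with hvdef
  have hvco : (v : ℝ) = σ₀ ^ 2 := rfl
  have hv : v ≠ 0 := by
    intro h
    have : (v : ℝ) = 0 := by rw [h]; rfl
    nlinarith
  set S : ℝ := ∑ i, (s₁ i - s₂ i) ^ 2 with hSdef
  set d : ℝ := Real.sqrt S with hddef
  have hS : 0 < S := Real.sqrt_pos.mp hd
  have hSd : S = d ^ 2 := (Real.sq_sqrt hS.le).symm
  set Lg : ℝ := Real.log (π₁ / π₂) with hLgdef
  set c : Fin L → ℝ := fun i => s₁ i - s₂ i with hcdef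
  set T : (Fin L → ℝ) → ℝ := fun y => ∑ i, c i * y i with hTdef
  have hT : Measurable T := by fun_prop
  set K : ℝ := ((∑ i, (s₁ i) ^ 2) - ∑ i, (s₂ i) ^ 2) / 2 with hKdef
  set ccrit : ℝ := K - σ₀ ^ 2 * Lg with hccritdef
  set ρ : (Fin L → ℝ) → ℝ≥0∞ := fun y => ∏ i, gRatio (s₂ i) (s₁ i) v (y i) with hρdef
  have hρmeas : Measurable ρ :=
    Finset.measurable_prod _ fun i _ => (gRatio_meas _ _ _).comp (measurable_pi_apply i)
  set μ₁ : Measure (Fin L → ℝ) := gaussianVec s₁ σ₀ with hμ₁def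
  set μ₂ : Measure (Fin L → ℝ) := gaussianVec s₂ σ₀ with hμ₂def
  haveI : IsProbabilityMeasure μ₁ := by rw [hμ₁def]; unfold gaussianVec; have := fun i => instIsProbabilityMeasureGaussianReal (s₁ i) ⟨σ₀ ^ 2, sq_nonneg σ₀⟩; infer_instance
  haveI : IsProbabilityMeasure μ₂ := by rw [hμ₂def]; unfold gaussianVec; have := fun i => instIsProbabilityMeasureGaussianReal (s₂ i) ⟨σ₀ ^ 2, sq_nonneg σ₀⟩; infer_instance
  have hwd : μ₂ = μ₁.withDensity ρ := pi_gauss_withDensity L s₁ s₂ hv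
  set A : Set (Fin L → ℝ) := {y | D y = 1} with hAdef
  have hA : MeasurableSet A := hD (measurableSet_singleton 1)
  have hAc : {y | D y = 0} = Aᶜ := by
    ext y
    have : ∀ b : Fin 2, b = 0 ↔ ¬ b = 1 := by decide
    simpa [hAdef] using this (D y)
  -- identify the MAP region
  have hBeq : {y | ENNReal.ofReal π₁ ≤ ENNReal.ofReal π₂ * ρ y} = T ⁻¹' (Iic ccrit) := by
    ext y
    have hρy : ρ y = ENNReal.ofReal (rexp ((-T y + K) / σ₀ ^ 2)) := by
      rw [hρdef]
      simp only [gRatio]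
      rw [← ENNReal.ofReal_prod_of_nonneg (fun i _ => (Real.exp_nonneg _)), ← Real.exp_sum]
      congr 2
      rw [← Finset.sum_div]
      congr 1
      rw [hTdef, hKdef, Finset.sum_add_distrib]
      congr 1
      · rw [← Finset.sum_neg_distrib]
        exact Finset.sum_congr rfl fun i _ => by rw [hcdef]; ring
      · rw [← Finset.sum_sub_distrib, Finset.sum_div]
    simp only [mem_setOf_eq, mem_preimage, mem_Iic, hρy]
    rw [← ENNReal.ofReal_mul hπ₂.le,
      ENNReal.ofReal_le_ofReal_iff (by positivity), mul_comm π₂, ← div_le_iff₀ hπ₂,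
      ← Real.log_le_iff_le_exp (by positivity), ← hLgdef, le_div_iff₀ (by positivity : (0:ℝ) < σ₀ ^ 2)]
    constructor <;> intro h <;> [skip; skip] <;> rw [hccritdef] at * <;> nlinarith
  -- the pushforward of T
  have hmap : ∀ s : Fin L → ℝ, (Measure.pi fun i => gaussianReal (s i) v).map T
      = gaussianReal (∑ i, c i * s i) (∑ i, ((c i)^2).toNNReal * v) :=
    fun s => map_sum_pi L c s (fun _ => v)
  set V : ℝ≥0 := ∑ i : Fin L, ((c i)^2).toNNReal * v with hVdef
  have hVco : (V : ℝ) = S * σ₀ ^ 2 := by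
    rw [hVdef, NNReal.coe_sum, hSdef, Finset.sum_mul]
    exact Finset.sum_congr rfl fun i _ => by
      rw [NNReal.coe_mul, hvco, Real.coe_toNNReal _ (sq_nonneg _), hcdef]
  have hVne : V ≠ 0 := by
    intro h
    have : (V : ℝ) = 0 := by rw [h]; rfl
    rw [hVco] at this
    exact absurd this (ne_of_gt (mul_pos hS (pow_pos hσ 2)))
  have hsqrtV : Real.sqrt V = d * σ₀ := by
    rw [hVco, hddef, Real.sqrt_mul hS.le, Real.sqrt_sq hσ.le]
  have hdpos : 0 < d := hd
  -- means
  have ha1 : (∑ i, c i * s₁ i) = S / 2 + K := by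
    rw [hSdef, hKdef, ← Finset.sum_sub_distrib, Finset.sum_div, Finset.sum_div,
      ← Finset.sum_add_distrib]
    exact Finset.sum_congr rfl fun i _ => by rw [hcdef]; ring
  have ha2 : (∑ i, c i * s₂ i) = -(S / 2) + K := by
    rw [hSdef, hKdef, ← Finset.sum_sub_distrib, Finset.sum_div, Finset.sum_div,
      ← Finset.sum_neg_distrib, ← Finset.sum_add_distrib]
    exact Finset.sum_congr rfl fun i _ => by rw [hcdef]; ring
  -- measures of the MAP regions
  have hμ₁B : μ₁ (T ⁻¹' (Iic ccrit)) = ENNReal.ofReal (Qfun (d / (2 * σ₀) + σ₀ / d * Lg)) := by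
    rw [hμ₁def]
    unfold gaussianVec
    rw [← hvdef, ← Measure.map_apply hT measurableSet_Iic, hmap s₁,
      gaussianReal_Iic _ hVne, hsqrtV, ha1]
    congr 2
    rw [hccritdef]
    rw [hSd]
    field_simp
    ring
  have hμ₂B : μ₂ ((T ⁻¹' (Iic ccrit))ᶜ) = ENNReal.ofReal (Qfun (d / (2 * σ₀) - σ₀ / d * Lg)) := by
    have : (T ⁻¹' (Iic ccrit))ᶜ = T ⁻¹' (Ioi ccrit) := by
      rw [← preimage_compl, compl_Iic]
    rw [this, hμ₂def]
    unfold gaussianVec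
    rw [← hvdef, ← Measure.map_apply hT measurableSet_Ioi, hmap s₂,
      gaussianReal_Ioi _ hVne, hsqrtV, ha2]
    congr 2
    rw [hccritdef, hSd]
    field_simp
    ring
  -- apply the comparison
  have hcomp := bayes_lb μ₁ hρmeas (ENNReal.ofReal π₁) (ENNReal.ofReal π₂) hA
  rw [← hwd, hBeq, hμ₁B, hμ₂B] at hcomp
  -- convert to reals
  rw [hAc]
  have hfin : ENNReal.ofReal π₁ * μ₁ A + ENNReal.ofReal π₂ * μ₂ Aᶜ ≠ ⊤ :=
    ENNReal.add_ne_top.mpr ⟨ENNReal.mul_ne_top ENNReal.ofReal_ne_top (measure_ne_top _ _),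
      ENNReal.mul_ne_top ENNReal.ofReal_ne_top (measure_ne_top _ _)⟩
  have := ENNReal.toReal_mono hfin hcomp
  rw [ENNReal.toReal_add (ENNReal.mul_ne_top ENNReal.ofReal_ne_top ENNReal.ofReal_ne_top)
      (ENNReal.mul_ne_top ENNReal.ofReal_ne_top ENNReal.ofReal_ne_top),
    ENNReal.toReal_add (ENNReal.mul_ne_top ENNReal.ofReal_ne_top (measure_ne_top _ _))
      (ENNReal.mul_ne_top ENNReal.ofReal_ne_top (measure_ne_top _ _)),
    ENNReal.toReal_mul, ENNReal.toReal_mul, ENNReal.toReal_mul, ENNReal.toReal_mul,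
    ENNReal.toReal_ofReal hπ₁.le, ENNReal.toReal_ofReal hπ₂.le,
    ENNReal.toReal_ofReal (Qfun_nonneg _), ENNReal.toReal_ofReal (Qfun_nonneg _)] at this
  exact this

end MAPaux
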